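/- (Lower-bound term in the CGAN decomposition) With the data joint p(x,c), the generator model pθ(x,c) = pθ(x|c)·p(c), model marginal pθ(x), model posterior qθ(c|x) = pθ(x,c)/pθ(x), and generative mutual information I_θ(X;C) as defined, Σ_{x,c} pθ(x,c)·log(p(c|x)/p(c)) = I_θ(X;C) − Σ_x pθ(x)·KL(qθ(·|x)‖p(·|x)), where KL(qθ(·|x)‖p(·|x)) = Σ_c qθ(c|x)·log(qθ(c|x)/p(c|x)). In particular this expectation is a lower bound to I_θ(X;C). -/

import Mathlib

/-- Gibbs' inequality. -/
lemma gibbs {C : Type*} [Fintype C] (q p : C → ℝ)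
    (hq0 : ∀ c, 0 < q c) (hp0 : ∀ c, 0 < p c)
    (hq1 : ∑ c, q c = 1) (hp1 : ∑ c, p c = 1) :
    0 ≤ ∑ c, q c * Real.log (q c / p c) := by
  have key : ∑ c, q c * Real.log (p c / q c) ≤ 0 := by
    calc ∑ c, q c * Real.log (p c / q c)
        ≤ ∑ c, q c * (p c / q c - 1) := by
          apply Finset.sum_le_sum
          intro c _
          exact mul_le_mul_of_nonneg_left
            (Real.log_le_sub_one_of_pos (div_pos (hp0 c) (hq0 c))) (hq0 c).le
      _ = ∑ c, (p c - q c) := by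
          apply Finset.sum_congr rfl
          intro c _
          rw [mul_sub, mul_div_cancel₀ _ (hq0 c).ne', mul_one]
      _ = 0 := by rw [Finset.sum_sub_distrib, hq1, hp1, sub_self]
  have : ∑ c, q c * Real.log (q c / p c) = -∑ c, q c * Real.log (p c / q c) := by
    rw [← Finset.sum_neg_distrib]
    apply Finset.sum_congr rfl
    intro c _
    rw [Real.log_div (hq0 c).ne' (hp0 c).ne', Real.log_div (hp0 c).ne' (hq0 c).ne']
    ring
  rw [this]
  linarith

/-- (Lower-bound term in the CGAN decomposition)
`Σ_{x,c} pθ(x,c)·log(p(c|x)/p(c)) = I_θ(X;C) − Σ_x pθ(x)·KL(qθ(·|x)‖p(·|x))`; in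
particular it is a lower bound to `I_θ(X;C)`. -/
theorem cgan_lower_bound_term
    {X C : Type*} [Fintype X] [Fintype C]
    (p : X → C → ℝ) (hp0 : ∀ x c, 0 < p x c) (hp1 : ∑ x, ∑ c, p x c = 1)
    (px : X → ℝ) (hpx : ∀ x, px x = ∑ c, p x c)
    (pc : C → ℝ) (hpc : ∀ c, pc c = ∑ x, p x c)
    (pcond : X → C → ℝ) (hpcond : ∀ x c, pcond x c = p x c / px x)
    (pθ : C → X → ℝ) (hpθ0 : ∀ c x, 0 < pθ c x) (hpθ1 : ∀ c, ∑ x, pθ c x = 1)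
    (pj : X → C → ℝ) (hpj : ∀ x c, pj x c = pθ c x * pc c)
    (pm : X → ℝ) (hpm : ∀ x, pm x = ∑ c, pj x c)
    (q : X → C → ℝ) (hq : ∀ x c, q x c = pj x c / pm x)
    (I : ℝ) (hI : I = ∑ x, ∑ c, pj x c * Real.log (pj x c / (pm x * pc c))) :
    (∑ x, ∑ c, pj x c * Real.log (pcond x c / pc c)) =
      I - (∑ x, pm x * ∑ c, q x c * Real.log (q x c / pcond x c)) ∧
    (∑ x, ∑ c, pj x c * Real.log (pcond x c / pc c)) ≤ I := by
  have hXne : Nonempty X := by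
    rcases isEmpty_or_nonempty X with h | h
    · simp at hp1
    · exact h
  have hCne : Nonempty C := by
    rcases isEmpty_or_nonempty C with h | h
    · simp at hp1
    · exact h
  have hpx0 : ∀ x, 0 < px x := fun x => by
    rw [hpx]; exact Finset.sum_pos (fun c _ => hp0 x c) Finset.univ_nonempty
  have hpc0 : ∀ c, 0 < pc c := fun c => by
    rw [hpc]; exact Finset.sum_pos (fun x _ => hp0 x c) Finset.univ_nonempty
  have hpcond0 : ∀ x c, 0 < pcond x c := fun x c => by
    rw [hpcond]; exact div_pos (hp0 x c) (hpx0 x)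
  have hpj0 : ∀ x c, 0 < pj x c := fun x c => by
    rw [hpj]; exact mul_pos (hpθ0 c x) (hpc0 c)
  have hpm0 : ∀ x, 0 < pm x := fun x => by
    rw [hpm]; exact Finset.sum_pos (fun c _ => hpj0 x c) Finset.univ_nonempty
  have hq0 : ∀ x c, 0 < q x c := fun x c => by
    rw [hq]; exact div_pos (hpj0 x c) (hpm0 x)
  have hq1 : ∀ x, ∑ c, q x c = 1 := fun x => by
    simp only [hq]
    rw [← Finset.sum_div, ← hpm, div_self (hpm0 x).ne']
  have hpcond1 : ∀ x, ∑ c, pcond x c = 1 := fun x => by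
    simp only [hpcond]
    rw [← Finset.sum_div, ← hpx, div_self (hpx0 x).ne']
  have key : (∑ x, ∑ c, pj x c * Real.log (pcond x c / pc c)) =
      I - (∑ x, pm x * ∑ c, q x c * Real.log (q x c / pcond x c)) := by
    rw [hI, ← Finset.sum_sub_distrib]
    apply Finset.sum_congr rfl
    intro x _
    rw [Finset.mul_sum, ← Finset.sum_sub_distrib]
    apply Finset.sum_congr rfl
    intro c _
    have e1 : pm x * (q x c * Real.log (q x c / pcond x c)) =
        pj x c * Real.log (pj x c / (pm x * pcond x c)) := by
      rw [hq, div_div]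
      field_simp
      rw [mul_assoc, mul_div_cancel_left₀ _ (hpm0 x).ne']
    rw [e1, ← mul_sub, Real.log_div (hpj0 x c).ne' (mul_pos (hpm0 x) (hpc0 c)).ne',
      Real.log_div (hpj0 x c).ne' (mul_pos (hpm0 x) (hpcond0 x c)).ne',
      Real.log_mul (hpm0 x).ne' (hpc0 c).ne',
      Real.log_mul (hpm0 x).ne' (hpcond0 x c).ne',
      Real.log_div (hpcond0 x c).ne' (hpc0 c).ne']
    ring
  refine ⟨key, ?_⟩
  rw [key]
  have : 0 ≤ ∑ x, pm x * ∑ c, q x c * Real.log (q x c / pcond x c) := by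
    apply Finset.sum_nonneg
    intro x _
    exact mul_nonneg (hpm0 x).le
      (gibbs (q x) (pcond x) (hq0 x) (hpcond0 x) (hq1 x) (hpcond1 x))
  linarith
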